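/- For any finite block B of positive integers, μ(C_B) = μ(C_{B*}), where B* is the reversal of B. -/

import Mathlib

open MeasureTheory

/-- The Gauss map `x ↦ {1/x}` on `[0,1)`. -/
noncomputable def gaussMap (x : ℝ) : ℝ := if x = 0 then 0 else Int.fract x⁻¹

/-- The cylinder `C_B`. -/
noncomputable def cfCyl (B : List ℕ+) : Set ℝ :=
  {x | x ∈ Set.Ico (0 : ℝ) 1 ∧
    ∀ i, (h : i < B.length) → ⌊(gaussMap^[i] x)⁻¹⌋ = ((B.get ⟨i, h⟩ : ℕ) : ℤ)}

/-- The Gauss measure `μ(A) = (1/log 2)·∫_A dx/(1+x)` on `[0,1)`. -/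
noncomputable def gaussMeasure : Measure ℝ :=
  (volume.restrict (Set.Ico (0 : ℝ) 1)).withDensity
    fun x => ENNReal.ofReal (1 / ((1 + x) * Real.log 2))

namespace CFRev

/-- Entries `(α, β, γ, δ)` of the product of the matrices `[[0,1],[1,aᵢ]]`. -/
def mat : List ℕ+ → ℕ × ℕ × ℕ × ℕ
  | [] => (1, 0, 0, 1)
  | a :: B =>
    ((mat B).2.2.1, (mat B).2.2.2, (mat B).1 + a * (mat B).2.2.1,
      (mat B).2.1 + a * (mat B).2.2.2)

lemma mat_cons (a : ℕ+) (B : List ℕ+) :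
    mat (a :: B) = ((mat B).2.2.1, (mat B).2.2.2, (mat B).1 + a * (mat B).2.2.1,
      (mat B).2.1 + a * (mat B).2.2.2) := rfl

/-- Invariant: `1 ≤ δ ∧ β ≤ δ ∧ α + β ≤ γ + δ`. -/
lemma mat_inv (B : List ℕ+) :
    1 ≤ (mat B).2.2.2 ∧ (mat B).2.1 ≤ (mat B).2.2.2 ∧
      (mat B).1 + (mat B).2.1 ≤ (mat B).2.2.1 + (mat B).2.2.2 := by
  induction B with
  | nil => simp [mat]
  | cons a B ih =>
    obtain ⟨h1, h2, h3⟩ := ih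
    have ha : 1 ≤ (a : ℕ) := a.one_le
    simp only [mat_cons]
    refine ⟨?_, ?_, ?_⟩
    · nlinarith
    · nlinarith
    · nlinarith

lemma mat_det (B : List ℕ+) :
    ((mat B).1 : ℤ) * (mat B).2.2.2 - (mat B).2.1 * (mat B).2.2.1 =
      (-1) ^ B.length := by
  induction B with
  | nil => simp [mat]
  | cons a B ih =>
    simp only [mat_cons, List.length_cons, pow_succ]
    push_cast
    nlinarith [ih]

lemma mat_append (B : List ℕ+) (a : ℕ+) :
    mat (B ++ [a]) = ((mat B).2.1, (mat B).1 + a * (mat B).2.1,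
      (mat B).2.2.2, (mat B).2.2.1 + a * (mat B).2.2.2) := by
  induction B with
  | nil => simp [mat]
  | cons b B ih =>
    rw [List.cons_append, mat_cons, ih, mat_cons]
    simp only [Prod.mk.injEq]
    exact ⟨trivial, trivial, trivial, by ring⟩

/-- Reversal transposes the matrix. -/
lemma mat_reverse (B : List ℕ+) :
    mat B.reverse = ((mat B).1, (mat B).2.2.1, (mat B).2.1, (mat B).2.2.2) := by
  induction B with
  | nil => simp [mat]
  | cons a B ih =>
    rw [List.reverse_cons, mat_append, ih, mat_cons]

/-- The Möbius map `t ↦ (αt+β)/(γt+δ)`. -/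
noncomputable def mob (m : ℕ × ℕ × ℕ × ℕ) (t : ℝ) : ℝ :=
  ((m.1 : ℝ) * t + m.2.1) / ((m.2.2.1 : ℝ) * t + m.2.2.2)

lemma mob_nil (t : ℝ) : mob (mat []) t = t := by simp [mob, mat]

lemma denom_pos (B : List ℕ+) {t : ℝ} (ht : 0 ≤ t) :
    0 < ((mat B).2.2.1 : ℝ) * t + (mat B).2.2.2 := by
  have h := (mat_inv B).1
  have h' : (1 : ℝ) ≤ ((mat B).2.2.2 : ℕ) := by exact_mod_cast h
  positivity

lemma mob_cons (a : ℕ+) (B : List ℕ+) {t : ℝ} (ht : 0 ≤ t) :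
    mob (mat (a :: B)) t = ((a : ℝ) + mob (mat B) t)⁻¹ := by
  have hd := denom_pos B ht
  rw [mat_cons, mob, mob]
  push_cast
  rw [eq_comm, inv_eq_iff_eq_inv, eq_comm, inv_div]
  have hd' : ((mat B).2.2.1 : ℝ) * t + (mat B).2.2.2 ≠ 0 := hd.ne'
  field_simp
  ring

lemma gaussMap_mem_Ico (x : ℝ) : gaussMap x ∈ Set.Ico (0:ℝ) 1 := by
  unfold gaussMap
  split
  · constructor <;> norm_num
  · exact ⟨Int.fract_nonneg _, Int.fract_lt_one _⟩

lemma mem_cfCyl_cons {a : ℕ+} {B : List ℕ+} {x : ℝ} :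
    x ∈ cfCyl (a :: B) ↔
      x ∈ Set.Ico (0:ℝ) 1 ∧ ⌊x⁻¹⌋ = ((a : ℕ) : ℤ) ∧ gaussMap x ∈ cfCyl B := by
  simp only [cfCyl, Set.mem_setOf_eq]
  constructor
  · rintro ⟨hx, hB⟩
    refine ⟨hx, ?_, gaussMap_mem_Ico x, fun i h => ?_⟩
    · simpa using hB 0 (by simp)
    · have := hB (i+1) (by simpa using Nat.succ_lt_succ h)
      simpa [Function.iterate_succ_apply] using this
  · rintro ⟨hx, h0, _, hB⟩
    refine ⟨hx, fun i h => ?_⟩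
    match i with
    | 0 => simpa using h0
    | (i+1) =>
      have := hB i (by simpa using Nat.lt_of_succ_lt_succ h)
      simpa [Function.iterate_succ_apply] using this

lemma cfCyl_nil : cfCyl [] = Set.Ico (0:ℝ) 1 := by
  ext x; simp [cfCyl]

/-- Every point of the cylinder is in the image of `[0,1)` under the Möbius map. -/
lemma cyl_sub (B : List ℕ+) :
    ∀ x ∈ cfCyl B, ∃ t ∈ Set.Ico (0:ℝ) 1, mob (mat B) t = x := by
  induction B with
  | nil => exact fun x hx => ⟨x, by simpa [cfCyl_nil] using hx, mob_nil x⟩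
  | cons a B ih =>
    intro x hx
    rw [mem_cfCyl_cons] at hx
    obtain ⟨⟨hx0, hx1⟩, hfl, hg⟩ := hx
    have hxne : x ≠ 0 := by
      rintro rfl
      have h0 : ((a:ℕ):ℤ) = 0 := by simpa using hfl.symm
      have := a.pos
      omega
    have hxpos : 0 < x := lt_of_le_of_ne hx0 (Ne.symm hxne)
    obtain ⟨t, ht, hmob⟩ := ih (gaussMap x) hg
    refine ⟨t, ht, ?_⟩
    rw [mob_cons a B ht.1, hmob]
    have hgm : gaussMap x = Int.fract x⁻¹ := by simp [gaussMap, hxne]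
    have hsum : (a : ℝ) + gaussMap x = x⁻¹ := by
      rw [hgm, Int.fract]
      have : ((⌊x⁻¹⌋ : ℤ) : ℝ) = ((a : ℕ) : ℝ) := by exact_mod_cast hfl
      linarith
    rw [hsum, inv_inv]

/-- The image of `(0,1)` under the Möbius map lies in the cylinder. -/
lemma sub_cyl (B : List ℕ+) :
    ∀ t ∈ Set.Ioo (0:ℝ) 1, mob (mat B) t ∈ cfCyl B ∧ mob (mat B) t ∈ Set.Ioo 0 1 := by
  induction B with
  | nil =>
    intro t ht
    rw [mob_nil]
    exact ⟨by simpa [cfCyl_nil] using Set.Ioo_subset_Ico_self ht, ht⟩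
  | cons a B ih =>
    intro t ht
    obtain ⟨hy, hy0, hy1⟩ := ih t ht
    set y := mob (mat B) t with hydef
    have ha1 : (1 : ℝ) ≤ (a : ℕ) := by exact_mod_cast a.one_le
    have hden : (0:ℝ) < (a : ℕ) + y := by linarith
    rw [mob_cons a B (le_of_lt ht.1)]
    have hx0 : 0 < ((a:ℝ) + y)⁻¹ := by positivity
    have hx1 : ((a:ℝ) + y)⁻¹ < 1 := by
      rw [inv_lt_one_iff₀]; right; linarith
    have hinv : (((a:ℝ) + y)⁻¹)⁻¹ = (a:ℝ) + y := inv_inv _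
    have hfl : ⌊(((a:ℝ) + y)⁻¹)⁻¹⌋ = ((a : ℕ) : ℤ) := by
      rw [hinv]
      have : ((a:ℝ) + y) = y + ((a:ℕ) : ℝ) := by ring
      rw [this, Int.floor_add_natCast, Int.floor_eq_zero_iff.mpr ⟨le_of_lt hy0, hy1⟩]
      simp
    have hgm : gaussMap (((a:ℝ) + y)⁻¹) = y := by
      have hne : ((a:ℝ) + y)⁻¹ ≠ 0 := ne_of_gt hx0
      rw [gaussMap, if_neg hne, hinv]
      have : ((a:ℝ) + y) = y + ((a:ℕ) : ℝ) := by ring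
      rw [this, Int.fract_add_natCast, Int.fract_eq_self.mpr ⟨le_of_lt hy0, hy1⟩]
    refine ⟨mem_cfCyl_cons.mpr ⟨⟨le_of_lt hx0, hx1⟩, hfl, by rwa [hgm]⟩, hx0, hx1⟩

lemma mob_contOn (B : List ℕ+) : ContinuousOn (mob (mat B)) (Set.Icc 0 1) := by
  apply ContinuousOn.div (by fun_prop) (by fun_prop)
  exact fun t ht => (denom_pos B ht.1).ne'

lemma mob_nonneg (B : List ℕ+) {t : ℝ} (ht : 0 ≤ t) : 0 ≤ mob (mat B) t := by
  apply div_nonneg _ (denom_pos B ht).le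
  positivity

lemma mob_le_one (B : List ℕ+) {t : ℝ} (ht : t ∈ Set.Icc (0:ℝ) 1) : mob (mat B) t ≤ 1 := by
  obtain ⟨h1, h2, h3⟩ := mat_inv B
  rw [mob, div_le_one (denom_pos B ht.1)]
  have h2' : ((mat B).2.1 : ℝ) ≤ (mat B).2.2.2 := by exact_mod_cast h2
  have h3' : ((mat B).1 : ℝ) + (mat B).2.1 ≤ ((mat B).2.2.1 : ℝ) + (mat B).2.2.2 := by
    exact_mod_cast h3
  nlinarith [ht.1, ht.2, (Nat.cast_nonneg (mat B).1 : (0:ℝ) ≤ (mat B).1),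
    (Nat.cast_nonneg (mat B).2.2.1 : (0:ℝ) ≤ (mat B).2.2.1)]

lemma mob_bounds (B : List ℕ+) {t : ℝ} (ht : t ∈ Set.Icc (0:ℝ) 1) :
    mob (mat B) t ∈ Set.Icc (min (mob (mat B) 0) (mob (mat B) 1))
      (max (mob (mat B) 0) (mob (mat B) 1)) := by
  obtain ⟨ht0, ht1⟩ := ht
  have hdt := denom_pos B ht0
  have hd0 := denom_pos B (le_refl (0:ℝ))
  have hd1 := denom_pos B (zero_le_one (α := ℝ))
  set α := (mat B).1
  set β := (mat B).2.1
  set γ := (mat B).2.2.1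
  set δ := (mat B).2.2.2
  have hdet := mat_det B
  rcases Nat.even_or_odd B.length with he | ho
  · have hdR : (α:ℝ) * δ - β * γ = 1 := by
      rw [he.neg_one_pow] at hdet; exact_mod_cast hdet
    constructor
    · refine le_trans (min_le_left _ _) ?_
      rw [mob, mob, div_le_div_iff₀ hd0 hdt]
      nlinarith
    · refine le_trans ?_ (le_max_right _ _)
      rw [mob, mob, div_le_div_iff₀ hdt hd1]
      nlinarith
  · have hdR : (β:ℝ) * γ - α * δ = 1 := by
      rw [ho.neg_one_pow] at hdet
      have : (β : ℤ) * γ - α * δ = 1 := by linarith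
      exact_mod_cast this
    constructor
    · refine le_trans (min_le_right _ _) ?_
      rw [mob, mob, div_le_div_iff₀ hd1 hdt]
      nlinarith
    · refine le_trans ?_ (le_max_left _ _)
      rw [mob, mob, div_le_div_iff₀ hdt hd0]
      nlinarith

lemma gaussMeasure_singleton (x : ℝ) : gaussMeasure {x} = 0 := by
  rw [gaussMeasure, withDensity_apply _ (measurableSet_singleton x)]
  apply setLIntegral_measure_zero
  rw [Measure.restrict_apply (measurableSet_singleton x)]
  exact measure_mono_null Set.inter_subset_left Real.volume_singleton

lemma gaussMeasure_sandwich {r s : ℝ} (h0 : 0 ≤ r) (hrs : r ≤ s) (h1 : s ≤ 1)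
    {S : Set ℝ} (hsub : Set.Ioo r s ⊆ S) (hsup : S ⊆ Set.Icc r s) :
    gaussMeasure S = ENNReal.ofReal ((Real.log (1+s) - Real.log (1+r)) / Real.log 2) := by
  have hpair : gaussMeasure {r, s} = 0 := by
    rw [Set.insert_eq]
    refine le_antisymm (le_trans (measure_union_le _ _) ?_) zero_le
    simp [gaussMeasure_singleton]
  have hIcc_le : gaussMeasure (Set.Icc r s) ≤ gaussMeasure (Set.Ioo r s) := by
    calc gaussMeasure (Set.Icc r s) ≤ gaussMeasure (Set.Ioo r s ∪ {r, s}) := by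
          apply measure_mono
          intro x hx
          rcases eq_or_lt_of_le hx.1 with h | h
          · exact Or.inr (Or.inl h.symm)
          rcases eq_or_lt_of_le hx.2 with h' | h'
          · exact Or.inr (Or.inr h')
          · exact Or.inl ⟨h, h'⟩
      _ ≤ gaussMeasure (Set.Ioo r s) + gaussMeasure {r, s} := measure_union_le _ _
      _ = gaussMeasure (Set.Ioo r s) := by rw [hpair, add_zero]
  have hval : gaussMeasure S = gaussMeasure (Set.Ioo r s) :=
    le_antisymm (le_trans (measure_mono hsup) hIcc_le) (measure_mono hsub)
  have hIoosub : Set.Ioo r s ⊆ Set.Ico 0 1 := fun x hx =>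
    ⟨le_of_lt (lt_of_le_of_lt h0 hx.1), lt_of_lt_of_le hx.2 h1⟩
  rw [hval, gaussMeasure, withDensity_apply _ measurableSet_Ioo,
    Measure.restrict_restrict measurableSet_Ioo, Set.inter_eq_left.mpr hIoosub]
  have h2 : (0:ℝ) < Real.log 2 := Real.log_pos (by norm_num)
  have hcont : ContinuousOn (fun x : ℝ => 1 / ((1 + x) * Real.log 2)) (Set.Icc r s) := by
    apply ContinuousOn.div continuousOn_const (by fun_prop)
    intro x hx
    have hx1 : (0:ℝ) < 1 + x := by linarith [hx.1]
    positivity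
  have hint : Integrable (fun x : ℝ => 1/((1+x)*Real.log 2)) (volume.restrict (Set.Ioo r s)) :=
    hcont.integrableOn_Icc.mono_set Set.Ioo_subset_Icc_self
  have hpos : 0 ≤ᵐ[volume.restrict (Set.Ioo r s)] fun x : ℝ => 1/((1+x)*Real.log 2) := by
    filter_upwards [ae_restrict_mem measurableSet_Ioo] with x hx
    have hx1 : (0:ℝ) < 1 + x := by nlinarith [hx.1]
    positivity
  rw [← ofReal_integral_eq_lintegral_ofReal hint hpos]
  congr 1
  have hrw : ∀ x : ℝ, 1/((1+x)*Real.log 2) = (1+x)⁻¹ * (Real.log 2)⁻¹ := fun x => by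
    rw [one_div, mul_inv]
  simp_rw [hrw]
  rw [integral_mul_const, ← integral_Ioc_eq_integral_Ioo, ← intervalIntegral.integral_of_le hrs]
  rw [show (fun x : ℝ => (1+x)⁻¹) = (fun x : ℝ => (fun u : ℝ => u⁻¹) (1+x)) from rfl]
  rw [intervalIntegral.integral_comp_add_left (fun u : ℝ => u⁻¹) 1]
  rw [integral_inv (by
    apply Set.notMem_uIcc_of_lt <;> linarith)]
  rw [Real.log_div (by linarith) (by linarith), div_eq_mul_inv]

lemma log_ratio (a b c d : ℝ) (ha : 0 ≤ a) (hb : 0 ≤ b) (hc : 0 ≤ c) (hd : 1 ≤ d) :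
    Real.log (1 + (a + b)/(c + d)) - Real.log (1 + b/d)
      = Real.log (a + b + c + d) - Real.log (c + d)
        - Real.log (b + d) + Real.log d := by
  have hd0 : (0:ℝ) < d := by linarith
  have hcd : (0:ℝ) < c + d := by linarith
  have habcd : (0:ℝ) < a + b + c + d := by linarith
  have hbd : (0:ℝ) < b + d := by linarith
  have h1 : 1 + (a + b)/(c + d) = (a + b + c + d)/(c + d) := by field_simp; ring
  have h2 : 1 + b/d = (b + d)/d := by field_simp; ring
  rw [h1, h2, Real.log_div habcd.ne' hcd.ne', Real.log_div hbd.ne' hd0.ne']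
  ring

/-- The key symmetric expression for the log-difference across the cylinder. -/
lemma logdiff (B : List ℕ+) :
    Real.log (1 + max (mob (mat B) 0) (mob (mat B) 1))
      - Real.log (1 + min (mob (mat B) 0) (mob (mat B) 1))
    = |Real.log (((mat B).1:ℝ) + (mat B).2.1 + (mat B).2.2.1 + (mat B).2.2.2)
        - Real.log (((mat B).2.2.1:ℝ) + (mat B).2.2.2)
        - Real.log (((mat B).2.1:ℝ) + (mat B).2.2.2) + Real.log ((mat B).2.2.2)| := by
  obtain ⟨h1, h2, h3⟩ := mat_inv B
  have hd1 : (1:ℝ) ≤ (mat B).2.2.2 := by exact_mod_cast h1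
  have hg0 : mob (mat B) 0 = ((mat B).2.1 : ℝ) / (mat B).2.2.2 := by
    simp [mob]
  have hg1 : mob (mat B) 1 =
      (((mat B).1 : ℝ) + (mat B).2.1) / (((mat B).2.2.1:ℝ) + (mat B).2.2.2) := by
    simp [mob]
  have key : Real.log (1 + mob (mat B) 1) - Real.log (1 + mob (mat B) 0)
      = Real.log (((mat B).1:ℝ) + (mat B).2.1 + (mat B).2.2.1 + (mat B).2.2.2)
        - Real.log (((mat B).2.2.1:ℝ) + (mat B).2.2.2)
        - Real.log (((mat B).2.1:ℝ) + (mat B).2.2.2) + Real.log ((mat B).2.2.2) := by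
    rw [hg0, hg1]
    exact log_ratio _ _ _ _ (Nat.cast_nonneg _) (Nat.cast_nonneg _) (Nat.cast_nonneg _) hd1
  have hm0 : 0 ≤ mob (mat B) 0 := mob_nonneg B le_rfl
  have hm1 : 0 ≤ mob (mat B) 1 := mob_nonneg B zero_le_one
  rcases le_total (mob (mat B) 0) (mob (mat B) 1) with h | h
  · rw [min_eq_left h, max_eq_right h, ← key, abs_of_nonneg]
    have : Real.log (1 + mob (mat B) 0) ≤ Real.log (1 + mob (mat B) 1) :=
      Real.log_le_log (by linarith) (by linarith)
    linarith
  · rw [min_eq_right h, max_eq_left h, ← key, abs_of_nonpos]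
    · ring
    have : Real.log (1 + mob (mat B) 1) ≤ Real.log (1 + mob (mat B) 0) :=
      Real.log_le_log (by linarith) (by linarith)
    linarith

/-- The measure of a cylinder in closed form. -/
lemma measure_formula (B : List ℕ+) :
    gaussMeasure (cfCyl B) = ENNReal.ofReal
      ((Real.log (1 + max (mob (mat B) 0) (mob (mat B) 1))
        - Real.log (1 + min (mob (mat B) 0) (mob (mat B) 1))) / Real.log 2) := by
  apply gaussMeasure_sandwich
  · exact le_min (mob_nonneg B le_rfl) (mob_nonneg B zero_le_one)
  · exact min_le_max
  · exact max_le (mob_le_one B ⟨le_rfl, zero_le_one⟩) (mob_le_one B ⟨zero_le_one, le_rfl⟩)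
  · intro x hx
    rcases le_total (mob (mat B) 0) (mob (mat B) 1) with h | h
    · rw [min_eq_left h, max_eq_right h] at hx
      obtain ⟨t, ht, rfl⟩ := intermediate_value_Ioo zero_le_one (mob_contOn B) hx
      exact (sub_cyl B t ht).1
    · rw [min_eq_right h, max_eq_left h] at hx
      obtain ⟨t, ht, rfl⟩ := intermediate_value_Ioo' zero_le_one (mob_contOn B) hx
      exact (sub_cyl B t ht).1
  · intro x hx
    obtain ⟨t, ht, rfl⟩ := cyl_sub B x hx
    exact mob_bounds B (Set.Ico_subset_Icc_self ht)

end CFRev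

/-- For any finite block `B`: `μ(C_B) = μ(C_{B*})` where `B*` is the reversal. -/
theorem gauss_measure_cylinder_reversal (B : List ℕ+) :
    gaussMeasure (cfCyl B) = gaussMeasure (cfCyl B.reverse) := by
  rw [CFRev.measure_formula B, CFRev.measure_formula B.reverse]
  congr 1
  rw [CFRev.logdiff B, CFRev.logdiff B.reverse]
  simp only [CFRev.mat_reverse]
  congr 1
  have harg : ((CFRev.mat B).1:ℝ) + (CFRev.mat B).2.2.1 + (CFRev.mat B).2.1 + (CFRev.mat B).2.2.2
      = ((CFRev.mat B).1:ℝ) + (CFRev.mat B).2.1 + (CFRev.mat B).2.2.1 + (CFRev.mat B).2.2.2 := by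
    ring
  rw [harg]
  ring
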